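/- Assume the following two statements hold: (C) for every uniform clutter C′ such that C′^+ ≠ ∅, C′^+ is chordal, C′ − F is chordal for every F ∈ SMS(C′^+), and C′ − v is chordal for every vertex v of C′, one has SMS(C′) ≠ ∅; and (D′) every uniform clutter C′ with C′^+ = ∅ whose complement's circuits admit an admissible order has a free maximal subcircuit. Then every uniform clutter C with at least one circuit whose complement's circuits admit an admissible order satisfies SMS(C) ≠ ∅. -/

import Mathlib

namespace ClutterPaper

variable {α : Type*} [DecidableEq α]

/-- `C` is a uniform clutter on vertex set `V` all of whose circuits have cardinality `c`
(i.e. a `(c-1)`-dimensional uniform clutter). -/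
def IsClutter (V : Finset α) (c : ℕ) (C : Finset (Finset α)) : Prop :=
  ∀ F ∈ C, F ⊆ V ∧ F.card = c

/-- The complement clutter `C̄`: all `c`-subsets of `V` not in `C`. -/
def compClutter (V : Finset α) (c : ℕ) (C : Finset (Finset α)) : Finset (Finset α) :=
  V.powersetCard c \ C

/-- `C^∨ = { V \ F | F ∈ C̄ }`. -/
def clutterDual (V : Finset α) (c : ℕ) (C : Finset (Finset α)) : Finset (Finset α) :=
  (compClutter V c C).image fun F => V \ F

/-- `A` is a clique of the clutter `C` (with circuit cardinality `c`) on vertex set `V`: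
all `c`-subsets of `A` are circuits. -/
def IsClique (V : Finset α) (c : ℕ) (C : Finset (Finset α)) (A : Finset α) : Prop :=
  A ⊆ V ∧ ∀ F ⊆ A, F.card = c → F ∈ C

/-- The closed neighborhood `N_C[e] = e ∪ { v ∈ V | e ∪ {v} ∈ C }`. -/
def closedNbhd (V : Finset α) (C : Finset (Finset α)) (e : Finset α) : Finset α :=
  e ∪ V.filter fun v => insert v e ∈ C

/-- `e` is a maximal subcircuit of the clutter `C` with circuit cardinality `c`:
`e` has cardinality `c - 1` and is contained in some circuit. -/
def IsMS (c : ℕ) (C : Finset (Finset α)) (e : Finset α) : Prop :=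
  e.card + 1 = c ∧ ∃ F ∈ C, e ⊆ F

/-- `e` is a simplicial maximal subcircuit: a maximal subcircuit whose closed
neighborhood is a clique. -/
def IsSMS (V : Finset α) (c : ℕ) (C : Finset (Finset α)) (e : Finset α) : Prop :=
  IsMS c C e ∧ IsClique V c C (closedNbhd V C e)

/-- `e` is a free maximal subcircuit: contained in exactly one circuit. -/
def IsFreeMS (c : ℕ) (C : Finset (Finset α)) (e : Finset α) : Prop :=
  e.card + 1 = c ∧ ∃! F, F ∈ C ∧ e ⊆ F

/-- Deletion `C − e` of a maximal subcircuit: the circuits not containing `e`. -/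
def delMS (C : Finset (Finset α)) (e : Finset α) : Finset (Finset α) :=
  C.filter fun F => ¬ e ⊆ F

/-- Deletion of a vertex: circuits (or faces) not containing `v`. -/
def delVert (C : Finset (Finset α)) (v : α) : Finset (Finset α) :=
  C.filter fun F => v ∉ F

/-- Chordality of a uniform clutter (circuit cardinality `c`) on `V`: there is a sequence of
deletions of simplicial maximal subcircuits ending in the clutter with no circuits. -/
inductive Chordal (V : Finset α) (c : ℕ) : Finset (Finset α) → Prop
  | empty : Chordal V c ∅
  | step {C : Finset (Finset α)} (e : Finset α) :
      IsSMS V c C e → Chordal V c (delMS C e) → Chordal V c C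

/-- The ascent `C⁺` of a clutter with circuit cardinality `c`: all `(c+1)`-subsets of `V`
that are cliques of `C`. -/
def ascent (V : Finset α) (c : ℕ) (C : Finset (Finset α)) : Finset (Finset α) :=
  (V.powersetCard (c + 1)).filter fun A => A.powersetCard c ⊆ C

/-- The simplicial complex `⟨D⟩` generated by a clutter `D`: all subsets of its elements. -/
def complexOf (D : Finset (Finset α)) : Finset (Finset α) :=
  D.biUnion Finset.powerset

/-- A family of finsets is a simplicial complex if it is downward closed. -/
def IsComplex (Δ : Finset (Finset α)) : Prop :=
  ∀ F ∈ Δ, ∀ G ⊆ F, G ∈ Δ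

/-- The facets (maximal faces) of a simplicial complex. -/
def facets (Δ : Finset (Finset α)) : Finset (Finset α) :=
  Δ.filter fun F => ∀ G ∈ Δ, F ⊆ G → F = G

/-- `link_Δ(v) = { F \ {v} | v ∈ F ∈ Δ }`. -/
def link (Δ : Finset (Finset α)) (v : α) : Finset (Finset α) :=
  (Δ.filter fun F => v ∈ F).image fun F => F.erase v

/-- `v` is a shedding vertex of `Δ`: no face of `link_Δ(v)` is a facet of `Δ − v`. -/
def Shedding (Δ : Finset (Finset α)) (v : α) : Prop :=
  ∀ F ∈ link Δ v, F ∉ facets (delVert Δ v)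

/-- Alexander dual of a simplicial complex on vertex set `V`:
`Δ^∨ = { V \ F | F ⊆ V, F ∉ Δ }`. -/
def alexDual (V : Finset α) (Δ : Finset (Finset α)) : Finset (Finset α) :=
  (V.powerset.filter fun F => F ∉ Δ).image fun F => V \ F

/-- `Δ` is pure with all facets of cardinality `c` (dimension `c - 1`), and nonempty. -/
def PureDim (Δ : Finset (Finset α)) (c : ℕ) : Prop :=
  Δ.Nonempty ∧ ∀ F ∈ facets Δ, F.card = c

/-- Vertex decomposability of a simplicial complex. -/
inductive VDecomp : Finset (Finset α) → Prop
  | simplex {Δ : Finset (Finset α)} : (facets Δ).card = 1 → VDecomp Δ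
  | shed {Δ : Finset (Finset α)} (v : α) : Shedding Δ v →
      VDecomp (link Δ v) → VDecomp (delVert Δ v) → VDecomp Δ

/-- The vertex set of a clutter (or of the complex it generates). -/
def vertexSet (Ω : Finset (Finset α)) : Finset α :=
  Ω.biUnion id

/-- `Ω` (given by its set of facets, each of cardinality `d+1`) is a `d`-cycle:
nonempty, pure of dimension `d`, `d`-path connected, and every `(d-1)`-dimensional
face lies in an even number of `d`-faces. -/
def IsCycle (d : ℕ) (Ω : Finset (Finset α)) : Prop :=
  Ω.Nonempty ∧ (∀ F ∈ Ω, F.card = d + 1) ∧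
    (∀ F ∈ Ω, ∀ G ∈ Ω,
      Relation.ReflTransGen (fun A B => A ∈ Ω ∧ B ∈ Ω ∧ (A ∩ B).card = d) F G) ∧
    ∀ e : Finset α, e.card = d → Even ((Ω.filter fun F => e ⊆ F).card)

/-- A face-minimal `d`-cycle: no `d`-cycle has a strictly smaller set of `d`-faces. -/
def FaceMinimalCycle (d : ℕ) (Ω : Finset (Finset α)) : Prop :=
  IsCycle d Ω ∧ ∀ Ω' : Finset (Finset α), IsCycle d Ω' → Ω' ⊆ Ω → Ω' = Ω

/-- `Ω` is `d`-complete: it contains every `(d+1)`-subset of its vertex set. -/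
def DComplete (d : ℕ) (Ω : Finset (Finset α)) : Prop :=
  ∀ F ⊆ vertexSet Ω, F.card = d + 1 → F ∈ Ω

/-- The complex `⟨C⟩` generated by the `d`-dimensional clutter `C` is `d`-chorded. -/
def Chorded (d : ℕ) (C : Finset (Finset α)) : Prop :=
  ∀ Ω : Finset (Finset α), FaceMinimalCycle d Ω → Ω ⊆ C → ¬ DComplete d Ω →
    ∃ (k : ℕ) (Ωs : Fin k → Finset (Finset α)), 2 ≤ k ∧
      (∀ i, IsCycle d (Ωs i) ∧ Ωs i ⊆ C) ∧
      (∀ F ∈ Ω, ∃ i, F ∈ Ωs i) ∧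
      (∀ F ∈ Ω, Odd ((Finset.univ.filter fun i => F ∈ Ωs i).card)) ∧
      (∀ F : Finset α, (∃ i, F ∈ Ωs i) → F ∉ Ω →
        Even ((Finset.univ.filter fun i => F ∈ Ωs i).card)) ∧
      ∀ i, vertexSet (Ωs i) ⊂ vertexSet Ω

/-- The circuits of `D` admit an admissible order. -/
def HasAdmissibleOrder (D : Finset (Finset α)) : Prop :=
  ∃ (t : ℕ) (F : Fin t → Finset α), Function.Injective F ∧
    (∀ G, G ∈ D ↔ ∃ i, F i = G) ∧
    ∀ i j : Fin t, j < i →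
      ∃ l ∈ F j \ F i, ∃ k : Fin t, k < i ∧ F k \ F i = {l}

/-- Contraction `D/v` of a (not necessarily uniform) clutter: the minimal sets of
`{ e \ {v} | e ∈ D }`. -/
def contractAux (D : Finset (Finset α)) (v : α) : Finset (Finset α) :=
  D.image fun e => e.erase v

def contract (D : Finset (Finset α)) (v : α) : Finset (Finset α) :=
  (contractAux D v).filter fun e => ∀ f ∈ contractAux D v, f ⊆ e → f = e

/-- `D` has a simplicial vertex (trivially true if `D` has no vertices). -/
def HasSimpVertex (D : Finset (Finset α)) : Prop :=
  vertexSet D = ∅ ∨ ∃ v ∈ vertexSet D, ∀ e₁ ∈ D, ∀ e₂ ∈ D, v ∈ e₁ → v ∈ e₂ →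
    ∃ e₃ ∈ D, e₃ ⊆ (e₁ ∪ e₂).erase v

/-- `D` is W-chordal: every clutter obtained from `D` by a sequence of vertex deletions
and contractions has a simplicial vertex. -/
def WChordal (D : Finset (Finset α)) : Prop :=
  ∀ D' : Finset (Finset α),
    Relation.ReflTransGen (fun X Y => ∃ v, Y = delVert X v ∨ Y = contract X v) D D' →
    HasSimpVertex D'

lemma mem_compClutter {V : Finset α} {c : ℕ} {C : Finset (Finset α)} {H : Finset α} :
    H ∈ compClutter V c C ↔ H ⊆ V ∧ H.card = c ∧ H ∉ C := by
  simp [compClutter, Finset.mem_powersetCard, and_assoc]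

lemma mem_ascent {V : Finset α} {c : ℕ} {C : Finset (Finset α)} {A : Finset α} :
    A ∈ ascent V c C ↔ A ⊆ V ∧ A.card = c + 1 ∧ ∀ G ⊆ A, G.card = c → G ∈ C := by
  simp only [ascent, Finset.mem_filter, Finset.mem_powersetCard, and_assoc]
  constructor
  · rintro ⟨h1, h2, h3⟩
    exact ⟨h1, h2, fun G hG hGc => h3 (Finset.mem_powersetCard.mpr ⟨hG, hGc⟩)⟩
  · rintro ⟨h1, h2, h3⟩
    refine ⟨h1, h2, fun G hG => ?_⟩
    rw [Finset.mem_powersetCard] at hG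
    exact h3 G hG.1 hG.2

lemma subset_card_succ {G S : Finset α} (hGS : G ⊆ S) (h : S.card = G.card + 1) :
    ∃ x, x ∉ G ∧ S = insert x G := by
  have hd : (S \ G).card = 1 := by rw [Finset.card_sdiff_of_subset hGS]; omega
  obtain ⟨x, hx⟩ := Finset.card_eq_one.mp hd
  have hxm : x ∈ S \ G := hx ▸ Finset.mem_singleton_self x
  rw [Finset.mem_sdiff] at hxm
  refine ⟨x, hxm.2, ?_⟩
  apply Finset.Subset.antisymm
  · intro y hy
    by_cases hyG : y ∈ G
    · exact Finset.mem_insert_of_mem hyG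
    · have : y ∈ S \ G := Finset.mem_sdiff.mpr ⟨hy, hyG⟩
      rw [hx, Finset.mem_singleton] at this
      simp [this]
  · intro y hy
    rcases Finset.mem_insert.mp hy with rfl | hyG
    · exact hxm.1
    · exact hGS hyG

/-- Admissible order, reformulated via a rank function. -/
def Adm (D : Finset (Finset α)) : Prop :=
  ∃ ρ : Finset α → ℕ, Set.InjOn ρ ↑D ∧
    ∀ G ∈ D, ∀ H ∈ D, ρ H < ρ G →
      ∃ l ∈ H \ G, ∃ K ∈ D, ρ K < ρ G ∧ K \ G = {l}

lemma adm_of_has {D : Finset (Finset α)} (h : HasAdmissibleOrder D) : Adm D := by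
  obtain ⟨t, F, hinj, hmem, hadm⟩ := h
  classical
  refine ⟨fun G => if h : ∃ i, F i = G then h.choose.val else 0, ?_, ?_⟩
  · intro G hG H hH hGH
    simp only [Finset.coe_mem] at *
    have hG' : ∃ i, F i = G := (hmem G).mp hG
    have hH' : ∃ i, F i = H := (hmem H).mp hH
    rw [dif_pos hG', dif_pos hH'] at hGH
    have : hG'.choose = hH'.choose := Fin.ext hGH
    rw [← hG'.choose_spec, ← hH'.choose_spec, this]
  · intro G hG H hH hlt
    have hG' : ∃ i, F i = G := (hmem G).mp hG
    have hH' : ∃ i, F i = H := (hmem H).mp hH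
    simp only [dif_pos hG', dif_pos hH'] at hlt
    set i := hG'.choose
    set j := hH'.choose
    obtain ⟨l, hl, k, hk, hkF⟩ := hadm i j hlt
    rw [hG'.choose_spec, hH'.choose_spec] at hl
    refine ⟨l, hl, F k, (hmem (F k)).mpr ⟨k, rfl⟩, ?_, by rw [hG'.choose_spec] at hkF; exact hkF⟩
    have hk' : ∃ i, F i = F k := ⟨k, rfl⟩
    simp only [dif_pos hG', dif_pos hk']
    have : hk'.choose = k := hinj hk'.choose_spec
    rw [this]
    exact hk
lemma has_of_adm {D : Finset (Finset α)} (h : Adm D) : HasAdmissibleOrder D := by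
  obtain ⟨ρ, hinj, hadm⟩ := h
  classical
  set t := D.card with ht
  have hcard : (D.image ρ).card = t := Finset.card_image_of_injOn hinj
  set e := (D.image ρ).orderIsoOfFin hcard with he
  have hex : ∀ i : Fin t, ∃! G, G ∈ D ∧ ρ G = (e i : ℕ) := by
    intro i
    have : (e i : ℕ) ∈ D.image ρ := (e i).2
    obtain ⟨G, hG, hGe⟩ := Finset.mem_image.mp this
    refine ⟨G, ⟨hG, hGe⟩, ?_⟩
    rintro H ⟨hH, hHe⟩
    exact hinj hH hG (hHe.trans hGe.symm)
  set F : Fin t → Finset α := fun i => (hex i).choose with hF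
  have hFmem : ∀ i, F i ∈ D := fun i => (hex i).choose_spec.1.1
  have hFρ : ∀ i, ρ (F i) = (e i : ℕ) := fun i => (hex i).choose_spec.1.2
  have hFinj : Function.Injective F := by
    intro i j hij
    have : (e i : ℕ) = (e j : ℕ) := by rw [← hFρ i, ← hFρ j, hij]
    have := Subtype.ext this
    exact e.injective this
  have hidx : ∀ G ∈ D, ∃ i, F i = G := by
    intro G hG
    have : ρ G ∈ D.image ρ := Finset.mem_image_of_mem ρ hG
    set i := e.symm ⟨ρ G, this⟩
    refine ⟨i, ?_⟩
    apply hinj (hFmem i) hG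
    rw [hFρ i]
    show ((e (e.symm ⟨ρ G, this⟩)) : ℕ) = ρ G
    rw [OrderIso.apply_symm_apply]
  have hmono : ∀ i j : Fin t, ρ (F i) < ρ (F j) → i < j := by
    intro i j hij
    rw [hFρ i, hFρ j] at hij
    have : e i < e j := hij
    exact e.lt_iff_lt.mp this
  refine ⟨t, F, hFinj, fun G => ⟨hidx G, ?_⟩, ?_⟩
  · rintro ⟨i, rfl⟩; exact hFmem i
  · intro i j hji
    have hρ : ρ (F j) < ρ (F i) := by
      rw [hFρ i, hFρ j]
      exact e.lt_iff_lt.mpr hji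
    obtain ⟨l, hl, K, hK, hKρ, hKd⟩ := hadm (F i) (hFmem i) (F j) (hFmem j) hρ
    obtain ⟨k, rfl⟩ := hidx K hK
    exact ⟨l, hl, k, hmono k i hKρ, hKd⟩
lemma sms_of_free {V : Finset α} {c : ℕ} {C : Finset (Finset α)} (hC : IsClutter V c C)
    {e : Finset α} (h : IsFreeMS c C e) : IsSMS V c C e := by
  obtain ⟨hcard, F, ⟨hF, heF⟩, huniq⟩ := h
  have hFV : F ⊆ V := (hC F hF).1
  have hFc : F.card = c := (hC F hF).2
  have hNF : closedNbhd V C e ⊆ F := by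
    intro x hx
    rcases Finset.mem_union.mp hx with hx | hx
    · exact heF hx
    · rw [Finset.mem_filter] at hx
      have : insert x e = F := huniq _ ⟨hx.2, Finset.subset_insert x e⟩
      rw [← this]
      exact Finset.mem_insert_self x e
  refine ⟨⟨hcard, F, hF, heF⟩, hNF.trans hFV, ?_⟩
  intro G hG hGc
  have : G = F := Finset.eq_of_subset_of_card_le (hG.trans hNF) (by omega)
  rw [this]; exact hF

lemma chordal_nonempty_sms {V : Finset α} {c : ℕ} {C : Finset (Finset α)}
    (h : Chordal V c C) (hne : C.Nonempty) : ∃ e, IsSMS V c C e := by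
  cases h with
  | empty => simp at hne
  | step e he _ => exact ⟨e, he⟩
lemma compClutter_delVert {V : Finset α} {c : ℕ} {C : Finset (Finset α)} {v : α} :
    compClutter (V.erase v) c (delVert C v) = (compClutter V c C).filter (fun H => v ∉ H) := by
  ext H
  simp only [mem_compClutter, Finset.mem_filter, delVert, Finset.subset_erase]
  constructor
  · rintro ⟨⟨hHV, hvH⟩, hc, hnC⟩
    exact ⟨⟨hHV, hc, fun hHC => hnC ⟨hHC, hvH⟩⟩, hvH⟩
  · rintro ⟨⟨hHV, hc, hnC⟩, hvH⟩
    exact ⟨⟨hHV, hvH⟩, hc, fun hHC => hnC hHC.1⟩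

lemma adm_delVert {V : Finset α} {c : ℕ} {C : Finset (Finset α)} {v : α}
    (h : Adm (compClutter V c C)) : Adm (compClutter (V.erase v) c (delVert C v)) := by
  obtain ⟨ρ, hinj, hadm⟩ := h
  rw [compClutter_delVert]
  refine ⟨ρ, hinj.mono (Finset.coe_subset.mpr (Finset.filter_subset _ _)), ?_⟩
  intro G hG H hH hlt
  rw [Finset.mem_filter] at hG hH
  obtain ⟨l, hl, K, hK, hKρ, hKd⟩ := hadm G hG.1 H hH.1 hlt
  refine ⟨l, hl, K, Finset.mem_filter.mpr ⟨hK, ?_⟩, hKρ, hKd⟩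
  intro hvK
  have : v ∈ K \ G := Finset.mem_sdiff.mpr ⟨hvK, hG.2⟩
  rw [hKd, Finset.mem_singleton] at this
  subst this
  exact hH.2 (Finset.mem_sdiff.mp hl).1
lemma mem_closedNbhd_of_circuit {V : Finset α} {C : Finset (Finset α)} {e H : Finset α}
    (hC : IsClutter V (e.card + 1) C) (hH : H ∈ C) (heH : e ⊆ H) :
    H ⊆ closedNbhd V C e := by
  obtain ⟨m, hm, rfl⟩ := subset_card_succ heH (hC H hH).2
  intro x hx
  rcases Finset.mem_insert.mp hx with rfl | hx
  · exact Finset.mem_union_right _ (Finset.mem_filter.mpr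
      ⟨(hC _ hH).1 (Finset.mem_insert_self x e), hH⟩)
  · exact Finset.mem_union_left _ hx

lemma mem_compClutter_delMS {V : Finset α} {c : ℕ} {C : Finset (Finset α)} {e H : Finset α} :
    H ∈ compClutter V c (delMS C e) ↔ H ⊆ V ∧ H.card = c ∧ (H ∉ C ∨ e ⊆ H) := by
  simp only [mem_compClutter, delMS, Finset.mem_filter]
  tauto

lemma adm_delMS {V : Finset α} {c : ℕ} {C : Finset (Finset α)}
    (hC : IsClutter V c C) {e : Finset α} (he : IsSMS V c C e)
    (h : Adm (compClutter V c C)) : Adm (compClutter V c (delMS C e)) := by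
  classical
  obtain ⟨ρ, hinj, hadm⟩ := h
  obtain ⟨⟨hecard, F₀, hF₀, heF₀⟩, hNV, hNcl⟩ := he
  set D := compClutter V c C with hD
  set S := C.filter (fun H => e ⊆ H) with hS
  set M := D.sup ρ with hM
  set ρ' : Finset α → ℕ := fun H => if H ∈ C ∧ e ⊆ H then M + 1 + S.toList.idxOf H else ρ H
    with hρ'
  have hρ'old : ∀ H ∈ D, ρ' H = ρ H := by
    intro H hH
    have : H ∉ C := (mem_compClutter.mp hH).2.2
    simp [hρ', this]
  have hρ'oldle : ∀ H ∈ D, ρ' H ≤ M := by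
    intro H hH
    rw [hρ'old H hH]
    exact Finset.le_sup hH
  have hρ'new : ∀ H, H ∈ C → e ⊆ H → ρ' H = M + 1 + S.toList.idxOf H := by
    intro H h1 h2; simp [hρ', h1, h2]
  have hsubN : ∀ H, H ∈ C → e ⊆ H → H ⊆ closedNbhd V C e := by
    intro H h1 h2
    have : IsClutter V (e.card + 1) C := by rwa [hecard]
    exact mem_closedNbhd_of_circuit this h1 h2
  have hmemD' : ∀ H, H ∈ compClutter V c (delMS C e) →
      H ∈ D ∨ (H ∈ C ∧ e ⊆ H) := by
    intro H hH
    obtain ⟨h1, h2, h3⟩ := mem_compClutter_delMS.mp hH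
    by_cases hHC : H ∈ C
    · right; exact ⟨hHC, h3.resolve_left (by simp [hHC])⟩
    · left; exact mem_compClutter.mpr ⟨h1, h2, hHC⟩
  have hDsub : D ⊆ compClutter V c (delMS C e) := by
    intro H hH
    obtain ⟨h1, h2, h3⟩ := mem_compClutter.mp hH
    exact mem_compClutter_delMS.mpr ⟨h1, h2, Or.inl h3⟩
  have hSsub : ∀ H, H ∈ C → e ⊆ H → H ∈ compClutter V c (delMS C e) := by
    intro H h1 h2
    exact mem_compClutter_delMS.mpr ⟨(hC H h1).1, (hC H h1).2, Or.inr h2⟩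
  refine ⟨ρ', ?_, ?_⟩
  · -- injectivity
    intro G hG H hH hGH
    rw [Finset.mem_coe] at hG hH
    rcases hmemD' G hG with hGo | hGn <;> rcases hmemD' H hH with hHo | hHn
    · rw [hρ'old G hGo, hρ'old H hHo] at hGH
      exact hinj hGo hHo hGH
    · exfalso
      rw [hρ'old G hGo, hρ'new H hHn.1 hHn.2] at hGH
      have := hρ'oldle G hGo
      rw [hρ'old G hGo] at this
      omega
    · exfalso
      rw [hρ'old H hHo, hρ'new G hGn.1 hGn.2] at hGH
      have := hρ'oldle H hHo
      rw [hρ'old H hHo] at this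
      omega
    · rw [hρ'new G hGn.1 hGn.2, hρ'new H hHn.1 hHn.2] at hGH
      have hGm : G ∈ S.toList := by
        rw [Finset.mem_toList, hS, Finset.mem_filter]; exact hGn
      have hHm : H ∈ S.toList := by
        rw [Finset.mem_toList, hS, Finset.mem_filter]; exact hHn
      exact (List.idxOf_inj (y := H) hGm).mp (by omega)
  · intro G hG H hH hlt
    rcases hmemD' G hG with hGo | hGn
    · -- G old: H must be old
      rcases hmemD' H hH with hHo | hHn
      · rw [hρ'old G hGo, hρ'old H hHo] at hlt
        obtain ⟨l, hl, K, hK, hKρ, hKd⟩ := hadm G hGo H hHo hlt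
        refine ⟨l, hl, K, hDsub hK, ?_, hKd⟩
        rw [hρ'old K hK, hρ'old G hGo]
        exact hKρ
      · exfalso
        rw [hρ'old G hGo, hρ'new H hHn.1 hHn.2] at hlt
        have := hρ'oldle G hGo
        rw [hρ'old G hGo] at this
        omega
    · -- G new
      have hGe : e ⊆ G := hGn.2
      have hGV : G ⊆ V := (hC G hGn.1).1
      have hGN : G ⊆ closedNbhd V C e := hsubN G hGn.1 hGn.2
      rcases hmemD' H hH with hHo | hHn
      · -- H old, G new
        obtain ⟨hHV, hHc, hHnC⟩ := mem_compClutter.mp hHo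
        have hkey : ∃ l ∈ H \ G, insert l e ∉ C := by
          by_contra hcon
          push_neg at hcon
          have : H ⊆ closedNbhd V C e := by
            intro x hx
            by_cases hxG : x ∈ G
            · exact hGN hxG
            · have hx' : x ∈ H \ G := Finset.mem_sdiff.mpr ⟨hx, hxG⟩
              refine Finset.mem_union_right _ (Finset.mem_filter.mpr ⟨hHV hx, hcon x hx'⟩)
          exact hHnC (hNcl H this hHc)
        obtain ⟨l, hl, hlC⟩ := hkey
        have hle : l ∉ e := fun hle => (Finset.mem_sdiff.mp hl).2 (hGe hle)
        have hlG : l ∉ G := (Finset.mem_sdiff.mp hl).2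
        have hKV : insert l e ⊆ V := by
          intro x hx
          rcases Finset.mem_insert.mp hx with rfl | hx
          · exact hHV (Finset.mem_sdiff.mp hl).1
          · exact hGV (hGe hx)
        have hKc : (insert l e).card = c := by
          rw [Finset.card_insert_of_notMem hle]; omega
        have hKD : insert l e ∈ D := mem_compClutter.mpr ⟨hKV, hKc, hlC⟩
        refine ⟨l, hl, insert l e, hDsub hKD, ?_, ?_⟩
        · have h1 := hρ'oldle _ hKD
          have h2 : ρ' G = M + 1 + S.toList.idxOf G := hρ'new G hGn.1 hGn.2
          omega
        · ext x
          simp only [Finset.mem_sdiff, Finset.mem_insert, Finset.mem_singleton]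
          constructor
          · rintro ⟨rfl | hx, hxG⟩
            · rfl
            · exact absurd (hGe hx) hxG
          · rintro rfl
            exact ⟨Or.inl rfl, hlG⟩
      · -- H new, G new
        have hne : H ≠ G := fun hEq => by rw [hEq] at hlt; omega
        obtain ⟨g, hg, hGeq⟩ := subset_card_succ hGe (by rw [(hC G hGn.1).2]; omega)
        obtain ⟨x, hx, hHeq⟩ := subset_card_succ hHn.2 (by rw [(hC H hHn.1).2]; omega)
        have hxg : x ≠ g := by
          intro hEq
          exact hne (by rw [hHeq, hGeq, hEq])
        have hxG : x ∉ G := by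
          rw [hGeq]
          simp only [Finset.mem_insert]
          rintro (rfl | hxe)
          · exact hxg rfl
          · exact hx hxe
        have hHG : H \ G = {x} := by
          ext y
          simp only [Finset.mem_sdiff, Finset.mem_singleton]
          constructor
          · rintro ⟨hyH, hyG⟩
            rw [hHeq] at hyH
            rcases Finset.mem_insert.mp hyH with rfl | hye
            · rfl
            · exact absurd (hGe hye) hyG
          · rintro rfl
            exact ⟨hHeq ▸ Finset.mem_insert_self _ e, hxG⟩
        exact ⟨x, by rw [hHG]; exact Finset.mem_singleton_self x, H, hH, hlt, hHG⟩
lemma isClutter_ascent {V : Finset α} {c : ℕ} {C : Finset (Finset α)} :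
    IsClutter V (c + 1) (ascent V c C) := by
  intro A hA
  exact ⟨(mem_ascent.mp hA).1, (mem_ascent.mp hA).2.1⟩

lemma sms_ascent_mem {V : Finset α} {c : ℕ} {C : Finset (Finset α)} {F : Finset α}
    (hF : IsSMS V (c + 1) (ascent V c C) F) : F ∈ C ∧ F.card = c ∧ F ⊆ V := by
  obtain ⟨⟨hcard, A, hA, hFA⟩, _, _⟩ := hF
  obtain ⟨hAV, hAc, hAm⟩ := mem_ascent.mp hA
  have hFc : F.card = c := by omega
  exact ⟨hAm F hFA hFc, hFc, hFA.trans hAV⟩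

lemma compClutter_erase {V : Finset α} {c : ℕ} {C : Finset (Finset α)} {F : Finset α}
    (hFC : F ∈ C) (hFc : F.card = c) (hFV : F ⊆ V) :
    compClutter V c (C.erase F) = insert F (compClutter V c C) := by
  ext H
  simp only [mem_compClutter, Finset.mem_insert, Finset.mem_erase]
  constructor
  · rintro ⟨h1, h2, h3⟩
    by_cases hHF : H = F
    · exact Or.inl hHF
    · exact Or.inr ⟨h1, h2, fun hc => h3 ⟨hHF, hc⟩⟩
  · rintro (rfl | ⟨h1, h2, h3⟩)
    · exact ⟨hFV, hFc, fun hc => hc.1 rfl⟩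
    · exact ⟨h1, h2, fun hc => h3 hc.2⟩

lemma adm_erase_sms {V : Finset α} {c : ℕ} {C : Finset (Finset α)}
    (hC : IsClutter V c C) {F : Finset α} (hF : IsSMS V (c + 1) (ascent V c C) F)
    (h : Adm (compClutter V c C)) : Adm (compClutter V c (C.erase F)) := by
  classical
  obtain ⟨hFC, hFc, hFV⟩ := sms_ascent_mem hF
  obtain ⟨⟨hcard, A₀, hA₀, hFA₀⟩, hNV, hNcl⟩ := hF
  obtain ⟨ρ, hinj, hadm⟩ := h
  set D := compClutter V c C with hD
  set M := D.sup ρ with hM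
  set N := closedNbhd V (ascent V c C) F with hN
  have hFN : F ⊆ N := by
    rw [hN]; unfold closedNbhd; exact Finset.subset_union_left
  rw [compClutter_erase hFC hFc hFV]
  have hFD : F ∉ D := fun hc => (mem_compClutter.mp hc).2.2 hFC
  set ρ' : Finset α → ℕ := fun H => if H = F then M + 1 else ρ H with hρ'
  have hρ'old : ∀ H ∈ D, ρ' H = ρ H := by
    intro H hH
    have : H ≠ F := fun hc => hFD (hc ▸ hH)
    simp [hρ', this]
  have hρ'oldle : ∀ H ∈ D, ρ' H ≤ M := by
    intro H hH
    rw [hρ'old H hH]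
    exact Finset.le_sup hH
  have hρ'F : ρ' F = M + 1 := by simp [hρ']
  -- key combinatorial fact
  have hkey : ∀ H ∈ D, ∃ l ∈ H \ F, ∃ m ∈ F, insert l (F.erase m) ∉ C := by
    intro H hH
    obtain ⟨hHV, hHc, hHnC⟩ := mem_compClutter.mp hH
    by_contra hcon
    push_neg at hcon
    have hHF : H ≠ F := fun h => hHnC (h ▸ hFC)
    have hHFne : (H \ F).Nonempty := by
      rw [Finset.sdiff_nonempty]
      intro hsub
      exact hHF (Finset.eq_of_subset_of_card_le hsub (by omega))
    have hstep1 : ∀ l ∈ H \ F, l ∈ N := by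
      intro l hl
      have hlF : l ∉ F := (Finset.mem_sdiff.mp hl).2
      have hlV : l ∈ V := hHV (Finset.mem_sdiff.mp hl).1
      have hasc : insert l F ∈ ascent V c C := by
        rw [mem_ascent]
        refine ⟨?_, ?_, ?_⟩
        · intro x hx
          rcases Finset.mem_insert.mp hx with rfl | hx
          · exact hlV
          · exact hFV hx
        · rw [Finset.card_insert_of_notMem hlF, hFc]
        · intro G hG hGc
          by_cases hlG : l ∈ G
          · have h1 : G.erase l ⊆ F := by
              intro x hx
              have hx1 := Finset.mem_of_mem_erase hx
              have hx2 := Finset.ne_of_mem_erase hx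
              rcases Finset.mem_insert.mp (hG hx1) with rfl | hxF
              · exact absurd rfl hx2
              · exact hxF
            have hGpos : 0 < G.card := Finset.card_pos.mpr ⟨l, hlG⟩
            have h2 : F.card = (G.erase l).card + 1 := by
              rw [Finset.card_erase_of_mem hlG]; omega
            obtain ⟨m, hm, hFeq⟩ := subset_card_succ h1 h2
            have hmF : m ∈ F := by rw [hFeq]; exact Finset.mem_insert_self m _
            have hmem := hcon l hl m hmF
            have hFe : F.erase m = G.erase l := by rw [hFeq, Finset.erase_insert hm]
            rw [hFe, Finset.insert_erase hlG] at hmem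
            exact hmem
          · have hGF : G ⊆ F := by
              intro x hx
              rcases Finset.mem_insert.mp (hG hx) with rfl | hxF
              · exact absurd hx hlG
              · exact hxF
            have : G = F := Finset.eq_of_subset_of_card_le hGF (by omega)
            rw [this]; exact hFC
      rw [hN]; unfold closedNbhd
      exact Finset.mem_union_right _ (Finset.mem_filter.mpr ⟨hlV, hasc⟩)
    have hHN : H ⊆ N := by
      intro x hx
      by_cases hxF : x ∈ F
      · exact hFN hxF
      · exact hstep1 x (Finset.mem_sdiff.mpr ⟨hx, hxF⟩)
    obtain ⟨l₀, hl₀⟩ := hHFne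
    have hl₀N := hstep1 l₀ hl₀
    have hNcard : H.card < N.card := by
      have h1 : insert l₀ F ⊆ N := by
        intro x hx
        rcases Finset.mem_insert.mp hx with rfl | hx
        · exact hl₀N
        · exact hFN hx
      have h2 : (insert l₀ F).card = c + 1 := by
        rw [Finset.card_insert_of_notMem (Finset.mem_sdiff.mp hl₀).2, hFc]
      have := Finset.card_le_card h1
      omega
    have hns : ¬ N ⊆ H := fun hs => absurd (Finset.card_le_card hs) (by omega)
    obtain ⟨x, hxN, hxH⟩ := Finset.not_subset.mp hns
    have hins : insert x H ∈ ascent V c C := by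
      apply hNcl (insert x H)
      · intro y hy
        rcases Finset.mem_insert.mp hy with rfl | hy
        · exact hxN
        · exact hHN hy
      · rw [Finset.card_insert_of_notMem hxH]; omega
    exact hHnC ((mem_ascent.mp hins).2.2 H (Finset.subset_insert x H) hHc)
  refine ⟨ρ', ?_, ?_⟩
  · intro G hG H hH hGH
    rw [Finset.mem_coe, Finset.mem_insert] at hG hH
    rcases hG with rfl | hGo <;> rcases hH with rfl | hHo
    · rfl
    · exfalso; have := hρ'oldle H hHo; omega
    · exfalso; have := hρ'oldle G hGo; omega
    · rw [hρ'old G hGo, hρ'old H hHo] at hGH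
      exact hinj hGo hHo hGH
  · intro G hG H hH hlt
    rw [Finset.mem_insert] at hG hH
    rcases hG with hGF | hGo
    · rw [hGF] at hlt ⊢
      rcases hH with hHF | hHo
      · rw [hHF] at hlt
        exact absurd hlt (lt_irrefl _)
      · obtain ⟨l, hl, m, hm, hK⟩ := hkey H hHo
        have hlF : l ∉ F := (Finset.mem_sdiff.mp hl).2
        have hlFe : l ∉ F.erase m := fun hc => hlF (Finset.mem_of_mem_erase hc)
        have hKV : insert l (F.erase m) ⊆ V := by
          intro x hx
          rcases Finset.mem_insert.mp hx with rfl | hx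
          · exact (mem_compClutter.mp hHo).1 (Finset.mem_sdiff.mp hl).1
          · exact hFV (Finset.mem_of_mem_erase hx)
        have hFpos : 0 < F.card := Finset.card_pos.mpr ⟨m, hm⟩
        have hKc : (insert l (F.erase m)).card = c := by
          rw [Finset.card_insert_of_notMem hlFe, Finset.card_erase_of_mem hm]; omega
        have hKD : insert l (F.erase m) ∈ D := mem_compClutter.mpr ⟨hKV, hKc, hK⟩
        refine ⟨l, hl, insert l (F.erase m), Finset.mem_insert_of_mem hKD, ?_, ?_⟩
        · have := hρ'oldle _ hKD; omega
        · ext y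
          simp only [Finset.mem_sdiff, Finset.mem_insert, Finset.mem_erase,
            Finset.mem_singleton]
          constructor
          · rintro ⟨rfl | ⟨hy1, hy2⟩, hyF⟩
            · rfl
            · exact absurd hy2 hyF
          · rintro rfl
            exact ⟨Or.inl rfl, hlF⟩
    · rcases hH with hHF | hHo
      · exfalso
        rw [hHF] at hlt
        have := hρ'oldle G hGo
        omega
      · rw [hρ'old G hGo, hρ'old H hHo] at hlt
        obtain ⟨l, hl, K, hK, hKρ, hKd⟩ := hadm G hGo H hHo hlt
        refine ⟨l, hl, K, Finset.mem_insert_of_mem hK, ?_, hKd⟩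
        rw [hρ'old K hK, hρ'old G hGo]
        exact hKρ
lemma adm_ascent {V : Finset α} {c : ℕ} {C : Finset (Finset α)}
    (h : Adm (compClutter V c C)) : Adm (compClutter V (c + 1) (ascent V c C)) := by
  classical
  obtain ⟨ρ, hinj, hadm⟩ := h
  set D := compClutter V c C with hD
  set D' := compClutter V (c + 1) (ascent V c C) with hD'
  set T := D'.card + 1 with hT
  set key : Finset α → ℕ := fun A =>
    if h : ((D.filter (fun G => G ⊆ A)).image ρ).Nonempty then ((D.filter (fun G => G ⊆ A)).image ρ).min' h
    else 0 with hkey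
  set ρ2 : Finset α → ℕ := fun A => key A * T + D'.toList.idxOf A with hρ2
  have hDmem : ∀ A ∈ D', ∃ G, G ∈ D ∧ G ⊆ A := by
    intro A hA
    obtain ⟨hAV, hAc, hAn⟩ := mem_compClutter.mp hA
    by_contra hcon
    push_neg at hcon
    apply hAn
    rw [mem_ascent]
    refine ⟨hAV, hAc, fun G hG hGc => ?_⟩
    by_contra hGC
    exact hcon G (mem_compClutter.mpr ⟨hG.trans hAV, hGc, hGC⟩) hG
  have hkeyspec : ∀ A ∈ D', ∃ G ∈ D, G ⊆ A ∧ ρ G = key A ∧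
      ∀ G' ∈ D, G' ⊆ A → key A ≤ ρ G' := by
    intro A hA
    obtain ⟨G₀, hG₀, hG₀A⟩ := hDmem A hA
    have hne : ((D.filter (fun G => G ⊆ A)).image ρ).Nonempty :=
      ⟨ρ G₀, Finset.mem_image_of_mem ρ (Finset.mem_filter.mpr ⟨hG₀, hG₀A⟩)⟩
    have hkA : key A = ((D.filter (fun G => G ⊆ A)).image ρ).min' hne := by
      rw [hkey]; simp only [dif_pos hne]
    have hmem := Finset.min'_mem _ hne
    rw [← hkA] at hmem
    obtain ⟨G, hG, hGρ⟩ := Finset.mem_image.mp hmem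
    rw [Finset.mem_filter] at hG
    refine ⟨G, hG.1, hG.2, hGρ, fun G' hG' hG'A => ?_⟩
    rw [hkA]
    have hmm : G' ∈ D.filter (fun G => G ⊆ A) := Finset.mem_filter.mpr ⟨hG', hG'A⟩
    exact Finset.min'_le _ _ (Finset.mem_image_of_mem ρ hmm)
  have htie : ∀ A ∈ D', D'.toList.idxOf A < T := by
    intro A hA
    have : D'.toList.idxOf A < D'.toList.length :=
      List.idxOf_lt_length_iff.mpr (Finset.mem_toList.mpr hA)
    rw [Finset.length_toList] at this
    omega
  refine ⟨ρ2, ?_, ?_⟩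
  · intro A hA B hB hAB
    rw [Finset.mem_coe] at hA hB
    have h1 := htie A hA
    have h2 := htie B hB
    have hkeq : key A = key B := by
      rw [hρ2] at hAB
      simp only at hAB
      nlinarith
    have hieq : D'.toList.idxOf A = D'.toList.idxOf B := by
      rw [hρ2] at hAB
      simp only at hAB
      rw [hkeq] at hAB
      omega
    exact List.idxOf_inj (y := B) (Finset.mem_toList.mpr hA) |>.mp hieq
  · intro A hA B hB hlt
    have htA := htie A hA
    have htB := htie B hB
    obtain ⟨GA, hGA, hGAsub, hGAρ, hGAmin⟩ := hkeyspec A hA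
    obtain ⟨GB, hGB, hGBsub, hGBρ, hGBmin⟩ := hkeyspec B hB
    have hkle : key B ≤ key A := by
      by_contra hc
      push_neg at hc
      have : ρ2 A < ρ2 B := by
        rw [hρ2]; simp only
        calc key A * T + D'.toList.idxOf A < key A * T + T := by omega
        _ = (key A + 1) * T := by ring
        _ ≤ key B * T := Nat.mul_le_mul_right T hc
        _ ≤ key B * T + D'.toList.idxOf B := Nat.le_add_right _ _
      omega
    obtain ⟨hAV, hAc, hAn⟩ := mem_compClutter.mp hA
    obtain ⟨hBV, hBc, hBn⟩ := mem_compClutter.mp hB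
    have hGAc : GA.card = c := (mem_compClutter.mp hGA).2.1
    have hGBc : GB.card = c := (mem_compClutter.mp hGB).2.1
    obtain ⟨a, haGA, hAeq⟩ := subset_card_succ hGAsub (by omega)
    rcases Nat.lt_or_ge (key B) (key A) with hklt | hkge
    · -- strictly smaller key
      have hρlt : ρ GB < ρ GA := by rw [hGAρ, hGBρ]; exact hklt
      obtain ⟨l, hl, K, hK, hKρ, hKd⟩ := hadm GA hGA GB hGB hρlt
      have hlGA : l ∉ GA := (Finset.mem_sdiff.mp hl).2
      have hKsub : K ⊆ insert l GA := by
        intro y hy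
        by_cases hyGA : y ∈ GA
        · exact Finset.mem_insert_of_mem hyGA
        · have : y ∈ K \ GA := Finset.mem_sdiff.mpr ⟨hy, hyGA⟩
          rw [hKd, Finset.mem_singleton] at this
          rw [this]; exact Finset.mem_insert_self l GA
      have hlA : l ∉ A := by
        intro hlA
        have hKA : K ⊆ A := by
          intro y hy
          rcases Finset.mem_insert.mp (hKsub hy) with rfl | hy'
          · exact hlA
          · exact hGAsub hy'
        have := hGAmin K hK hKA
        rw [hGAρ] at hKρ
        omega
      have hlB : l ∈ B \ A := Finset.mem_sdiff.mpr ⟨hGBsub (Finset.mem_sdiff.mp hl).1, hlA⟩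
      have haK : a ∉ K := by
        intro haK
        rcases Finset.mem_insert.mp (hKsub haK) with rfl | hy'
        · exact hlA (hAeq ▸ Finset.mem_insert_self a GA)
        · exact haGA hy'
      have hKV : K ⊆ V := (mem_compClutter.mp hK).1
      have hKc : K.card = c := (mem_compClutter.mp hK).2.1
      have hKnC : K ∉ C := (mem_compClutter.mp hK).2.2
      have haV : a ∈ V := hAV (hAeq ▸ Finset.mem_insert_self a GA)
      set A' := insert a K with hA'
      have hA'V : A' ⊆ V := by
        intro y hy
        rcases Finset.mem_insert.mp hy with rfl | hy
        · exact haV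
        · exact hKV hy
      have hA'c : A'.card = c + 1 := by
        rw [hA', Finset.card_insert_of_notMem haK, hKc]
      have hA'D' : A' ∈ D' := by
        rw [hD', mem_compClutter]
        refine ⟨hA'V, hA'c, fun hasc => ?_⟩
        exact hKnC ((mem_ascent.mp hasc).2.2 K (Finset.subset_insert a K) hKc)
      have hkeyA' : key A' ≤ ρ K := hkeyspec A' hA'D' |>.elim
        (fun G hG => by
          obtain ⟨hG1, hG2, hG3, hG4⟩ := hG
          exact hG4 K hK (Finset.subset_insert a K))
      have hρ2lt : ρ2 A' < ρ2 A := by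
        have h1 := htie A' hA'D'
        rw [hρ2]; simp only
        rw [hGAρ] at hKρ
        calc key A' * T + D'.toList.idxOf A' < key A' * T + T := by omega
        _ = (key A' + 1) * T := by ring
        _ ≤ key A * T := Nat.mul_le_mul_right T (by omega)
        _ ≤ key A * T + D'.toList.idxOf A := Nat.le_add_right _ _
      refine ⟨l, hlB, A', hA'D', hρ2lt, ?_⟩
      ext y
      simp only [Finset.mem_sdiff, Finset.mem_singleton]
      constructor
      · rintro ⟨hy1, hy2⟩
        rcases Finset.mem_insert.mp hy1 with rfl | hyK
        · exact absurd (hAeq ▸ Finset.mem_insert_self y GA) hy2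
        · have hyGA : y ∉ GA := fun hc => hy2 (hGAsub hc)
          have : y ∈ K \ GA := Finset.mem_sdiff.mpr ⟨hyK, hyGA⟩
          rw [hKd, Finset.mem_singleton] at this
          exact this
      · rintro rfl
        have hlK : y ∈ K \ GA := by rw [hKd]; exact Finset.mem_singleton_self y
        exact ⟨Finset.mem_insert_of_mem (Finset.mem_sdiff.mp hlK).1, hlA⟩
    · -- equal keys
      have hkeq : key A = key B := by omega
      have hGeq : GB = GA := by
        apply hinj hGB hGA
        rw [hGAρ, hGBρ, hkeq]
      subst hGeq
      have hAB : A ≠ B := by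
        intro hc
        rw [hc] at hlt
        omega
      obtain ⟨b, hbGB, hBeq⟩ := subset_card_succ hGBsub (by omega)
      have hab : b ≠ a := by
        intro hc
        rw [hc] at hBeq
        exact hAB (hAeq.trans hBeq.symm)
      have hbA : b ∉ A := by
        rw [hAeq]
        simp only [Finset.mem_insert]
        rintro (rfl | hbGA)
        · exact hab rfl
        · exact hbGB hbGA
      have hBA : B \ A = {b} := by
        ext y
        simp only [Finset.mem_sdiff, Finset.mem_singleton]
        constructor
        · rintro ⟨hy1, hy2⟩
          rw [hBeq] at hy1
          rcases Finset.mem_insert.mp hy1 with rfl | hyGB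
          · rfl
          · exact absurd (hGAsub hyGB) hy2
        · rintro rfl
          have hbB : y ∈ B := by rw [hBeq]; exact Finset.mem_insert_self y _
          exact ⟨hbB, hbA⟩
      exact ⟨b, by rw [hBA]; exact Finset.mem_singleton_self b, B, hB, hlt, hBA⟩
lemma isClutter_delVert {V : Finset α} {c : ℕ} {C : Finset (Finset α)} {v : α}
    (hC : IsClutter V c C) : IsClutter (V.erase v) c (delVert C v) := by
  intro F hF
  rw [delVert, Finset.mem_filter] at hF
  exact ⟨Finset.subset_erase.mpr ⟨(hC F hF.1).1, hF.2⟩, (hC F hF.1).2⟩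

lemma mainAux
    (hCstat : ∀ (V : Finset α) (d : ℕ) (C : Finset (Finset α)),
      IsClutter V (d + 1) C → (ascent V (d + 1) C).Nonempty →
      Chordal V (d + 2) (ascent V (d + 1) C) →
      (∀ F : Finset α, IsSMS V (d + 2) (ascent V (d + 1) C) F →
        Chordal V (d + 1) (C.erase F)) →
      (∀ v ∈ V, Chordal (V.erase v) (d + 1) (delVert C v)) →
      ∃ e, IsSMS V (d + 1) C e)
    (hDstat : ∀ (V : Finset α) (d : ℕ) (C : Finset (Finset α)),
      IsClutter V (d + 1) C → ascent V (d + 1) C = ∅ →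
      HasAdmissibleOrder (compClutter V (d + 1) C) →
      ∃ e, IsFreeMS (d + 1) C e) :
    ∀ (N : ℕ) (V : Finset α) (d : ℕ) (C : Finset (Finset α)),
      C.card + 2 ^ V.card * (V.card + 1 - (d + 1)) + 4 ^ V.card * V.card ≤ N →
      IsClutter V (d + 1) C → Adm (compClutter V (d + 1) C) → Chordal V (d + 1) C := by
  intro N
  induction N with
  | zero =>
    intro V d C hμ hC hAdm
    have : C = ∅ := Finset.card_eq_zero.mp (by omega)
    rw [this]
    exact Chordal.empty
  | succ N IH =>
    intro V d C hμ hC hAdm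
    rcases Finset.eq_empty_or_nonempty C with rfl | hne
    · exact Chordal.empty
    have hCpos : 1 ≤ C.card := Finset.card_pos.mpr hne
    obtain ⟨F₀, hF₀⟩ := hne
    have hdn : d + 1 ≤ V.card := by
      have h1 := (hC F₀ hF₀).2
      have h2 := Finset.card_le_card (hC F₀ hF₀).1
      omega
    have hn1 : 1 ≤ V.card := by omega
    -- obtain a simplicial maximal subcircuit
    have hsms : ∃ e, IsSMS V (d + 1) C e := by
      by_cases hasc : ascent V (d + 1) C = ∅
      · obtain ⟨e, hfree⟩ := hDstat V d C hC hasc (has_of_adm hAdm)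
        exact ⟨e, sms_of_free hC hfree⟩
      · have hascne : (ascent V (d + 1) C).Nonempty := Finset.nonempty_iff_ne_empty.mpr hasc
        have hA₀ex := hascne
        obtain ⟨A₀, hA₀⟩ := hA₀ex
        have hdn2 : d + 2 ≤ V.card := by
          have h1 := (mem_ascent.mp hA₀).2.1
          have h2 := Finset.card_le_card (mem_ascent.mp hA₀).1
          omega
        have hascle : (ascent V (d + 1) C).card ≤ 2 ^ V.card - 1 := by
          have hsub : ascent V (d + 1) C ⊆ V.powerset.erase ∅ := by
            intro A hA
            rw [Finset.mem_erase]
            refine ⟨?_, Finset.mem_powerset.mpr (mem_ascent.mp hA).1⟩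
            intro hc
            have := (mem_ascent.mp hA).2.1
            rw [hc] at this
            simp at this
          have := Finset.card_le_card hsub
          rw [Finset.card_erase_of_mem (Finset.empty_mem_powerset V),
            Finset.card_powerset] at this
          exact this
        have hsplit : 2 ^ V.card * (V.card + 1 - (d + 1)) =
            2 ^ V.card * (V.card + 1 - (d + 1 + 1)) + 2 ^ V.card := by
          have h : V.card + 1 - (d + 1) = (V.card + 1 - (d + 1 + 1)) + 1 := by omega
          rw [h, Nat.mul_add, Nat.mul_one]
        have hpow : 1 ≤ 2 ^ V.card := Nat.one_le_two_pow
        -- chordality of the ascent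
        have hchasc : Chordal V (d + 2) (ascent V (d + 1) C) := by
          apply IH V (d + 1) (ascent V (d + 1) C) (by omega) isClutter_ascent
          exact adm_ascent hAdm
        -- chordality of erasures
        have hcherase : ∀ F : Finset α, IsSMS V (d + 2) (ascent V (d + 1) C) F →
            Chordal V (d + 1) (C.erase F) := by
          intro F hF
          have hFC : F ∈ C := (sms_ascent_mem hF).1
          have hcard : (C.erase F).card = C.card - 1 := Finset.card_erase_of_mem hFC
          apply IH V d (C.erase F) (by omega)
            (fun G hG => hC G (Finset.mem_of_mem_erase hG))
          exact adm_erase_sms hC hF hAdm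
        -- chordality of vertex deletions
        have hchvert : ∀ v ∈ V, Chordal (V.erase v) (d + 1) (delVert C v) := by
          intro v hv
          have hvc : (V.erase v).card = V.card - 1 := Finset.card_erase_of_mem hv
          have hdel : (delVert C v).card ≤ C.card := Finset.card_filter_le _ _
          have h2 : 2 ^ (V.card - 1) * (V.card - 1 + 1 - (d + 1)) ≤
              2 ^ V.card * (V.card + 1 - (d + 1)) :=
            Nat.mul_le_mul (Nat.pow_le_pow_right (by norm_num) (by omega)) (by omega)
          have e4 : 4 ^ V.card = 4 ^ (V.card - 1) * 4 := by
            conv_lhs => rw [show V.card = (V.card - 1) + 1 by omega]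
            rw [pow_succ]
          have h41 : 1 ≤ 4 ^ (V.card - 1) := Nat.one_le_pow _ _ (by norm_num)
          have h4 : 4 ^ (V.card - 1) * (V.card - 1) + 1 ≤ 4 ^ V.card * V.card := by
            rw [e4]
            calc 4 ^ (V.card - 1) * (V.card - 1) + 1
                ≤ 4 ^ (V.card - 1) * (V.card - 1) + 4 ^ (V.card - 1) := by omega
              _ = 4 ^ (V.card - 1) * (V.card - 1 + 1) := by ring
              _ = 4 ^ (V.card - 1) * V.card := by rw [Nat.sub_add_cancel hn1]
              _ ≤ 4 ^ (V.card - 1) * (4 * V.card) := by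
                  apply Nat.mul_le_mul_left
                  omega
              _ = 4 ^ (V.card - 1) * 4 * V.card := by ring
          apply IH (V.erase v) d (delVert C v) ?_ (isClutter_delVert hC)
            (adm_delVert hAdm)
          rw [hvc]
          omega
        exact hCstat V d C hC hascne hchasc hcherase hchvert
    obtain ⟨e, hSMS⟩ := hsms
    refine Chordal.step e hSMS ?_
    -- recurse on the deletion
    obtain ⟨hecard, F₁, hF₁, heF₁⟩ := hSMS.1
    have hsub : delMS C e ⊆ C := Finset.filter_subset _ _
    have hlt : (delMS C e).card < C.card := by
      apply Finset.card_lt_card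
      rw [Finset.ssubset_iff_of_subset hsub]
      exact ⟨F₁, hF₁, fun hmem => (Finset.mem_filter.mp hmem).2 heF₁⟩
    apply IH V d (delMS C e) (by omega) (fun G hG => hC G (hsub hG))
    exact adm_delMS hC hSMS hAdm

/-- Assuming (C): every uniform clutter `C'` with nonempty chordal ascent,
with `C' − F` chordal for all `F ∈ SMS(C'⁺)` and `C' − v` chordal for all vertices `v`, has
`SMS(C') ≠ ∅`; and (D′): every uniform clutter with empty ascent whose complement admits an
admissible order has a free maximal subcircuit; then every uniform clutter with at least one
circuit whose complement admits an admissible order has a simplicial maximal subcircuit. -/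
theorem sms_nonempty_of_linear_quotients
    (hCstat : ∀ (V : Finset α) (d : ℕ) (C : Finset (Finset α)),
      IsClutter V (d + 1) C → (ascent V (d + 1) C).Nonempty →
      Chordal V (d + 2) (ascent V (d + 1) C) →
      (∀ F : Finset α, IsSMS V (d + 2) (ascent V (d + 1) C) F →
        Chordal V (d + 1) (C.erase F)) →
      (∀ v ∈ V, Chordal (V.erase v) (d + 1) (delVert C v)) →
      ∃ e, IsSMS V (d + 1) C e)
    (hDstat : ∀ (V : Finset α) (d : ℕ) (C : Finset (Finset α)),
      IsClutter V (d + 1) C → ascent V (d + 1) C = ∅ →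
      HasAdmissibleOrder (compClutter V (d + 1) C) →
      ∃ e, IsFreeMS (d + 1) C e) :
    ∀ (V : Finset α) (d : ℕ) (C : Finset (Finset α)),
      IsClutter V (d + 1) C → C.Nonempty →
      HasAdmissibleOrder (compClutter V (d + 1) C) →
      ∃ e, IsSMS V (d + 1) C e := by
  intro V d C hC hne hHas
  have hAdm := adm_of_has hHas
  have hch := mainAux hCstat hDstat
    (C.card + 2 ^ V.card * (V.card + 1 - (d + 1)) + 4 ^ V.card * V.card)
    V d C le_rfl hC hAdm
  exact chordal_nonempty_sms hch hne

end ClutterPaper
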